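/- arXiv:1511.09305 — 2 statements merged into one kernel-verified Lean document; each statement's English description precedes it below -/
import Mathlib

section
/- There exists a function ξ : U² → ℂ, analytic in the pair (a,b), such that for all (a,b) ∈ U², g((1−a)/(1−b)) = (a−b)² ξ(a,b). -/
open Complex Finset MeasureTheory
open scoped Real Classical

noncomputable section

/-- The set of primes `p ≤ y`. -/
def primesLe (y : ℝ) : Finset ℕ := (Finset.Iic ⌊y⌋₊).filter Nat.Prime

/-- `α` satisfies the saddle-point equation `∑_{p ≤ y} log p/(p^α − 1) = log x`. -/
def saddleEq (x y α : ℝ) : Prop :=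
  ∑ p ∈ primesLe y, Real.log p / ((p : ℝ) ^ α - 1) = Real.log x

/-- `ū = min{u, π(y)}` where `u = log x/log y`. -/
def ubar (x y : ℝ) : ℝ := min (Real.log x / Real.log y) ((primesLe y).card)

def sigma2 (y α : ℝ) : ℝ :=
  ∑ p ∈ primesLe y, (Real.log p) ^ 2 * (p : ℝ) ^ α / ((p : ℝ) ^ α - 1) ^ 2

def sigma2t (y α : ℝ) : ℝ :=
  ∑ p ∈ primesLe y, (Real.log p) ^ 2 / ((p : ℝ) ^ α - 1) ^ 2

/-- `ϱ = (1/2)(σ₂ − σ̃₂/3)^{1/2}`. -/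
def rhoXY (y α : ℝ) : ℝ := (1 / 2) * Real.sqrt (sigma2 y α - sigma2t y α / 3)

/-- `n` is `y`-friable: every prime factor of `n` is at most `y`. -/
def friable (y : ℝ) (n : ℕ) : Prop := ∀ p : ℕ, p.Prime → p ∣ n → (p : ℝ) ≤ y

/-- `S(x,y)`: the set of `y`-friable integers `1 ≤ n ≤ x`. -/
def Sxy (x y : ℝ) : Finset ℕ := (Finset.Icc 1 ⌊x⌋₊).filter (friable y)

/-- `Ψ(x,y) = #S(x,y)`. -/
def Psi (x y : ℝ) : ℕ := (Sxy x y).card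

/-- `D(x,y;γ) = Ψ(x,y)⁻¹ ∑_{n ∈ S(x,y)} τ(n)⁻¹ #{d ∣ n : d ≥ √n e^γ}`. -/
def Dxy (x y γ : ℝ) : ℝ :=
  (Psi x y : ℝ)⁻¹ * ∑ n ∈ Sxy x y,
    ((n.divisors.card : ℝ))⁻¹ *
      ((n.divisors.filter (fun d => Real.sqrt n * Real.exp γ ≤ (d : ℝ))).card : ℝ)

/-- `Φ(v) = ∫_v^∞ e^{-z²/2} dz/√(2π)`. -/
def PhiGauss (v : ℝ) : ℝ :=
  ∫ z in Set.Ioi v, Real.exp (-z ^ 2 / 2) / Real.sqrt (2 * Real.pi)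

/-- `g(z) = log((z^{1/2} − z^{-1/2})/log z)`, with `g(1) = 0`. -/
def gfun (z : ℂ) : ℂ :=
  if z = 1 then 0
  else Complex.log ((z ^ (2⁻¹ : ℂ) - z ^ (-2⁻¹ : ℂ)) / Complex.log z)

/-- `Ξ(a,b) = −(1/2)log(1−a) − (1/2)log(1−b) − g((1−a)/(1−b))`. -/
def Xi (a b : ℂ) : ℂ :=
  -(2⁻¹ : ℂ) * Complex.log (1 - a) - (2⁻¹ : ℂ) * Complex.log (1 - b) -
    gfun ((1 - a) / (1 - b))

/-- `f_y(s,w) = ∑_{p ≤ y} Ξ(p^{-s}, p^{-w})`. -/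
def fy (y : ℝ) (s w : ℂ) : ℂ := ∑ p ∈ primesLe y, Xi ((p : ℂ) ^ (-s)) ((p : ℂ) ^ (-w))

/-- `F_y(s,w) = exp(f_y(s,w))`. -/
def Fy (y : ℝ) (s w : ℂ) : ℂ := Complex.exp (fy y s w)

/-- `F_y(σ,κ)` at real arguments, as a (positive) real number. -/
def FyR (y σ κ : ℝ) : ℝ := Real.exp ((fy y (σ : ℂ) (κ : ℂ)).re)

/-- `∂_{kℓ}f(s,w)`: partial derivative `k` times in the first variable and `ℓ` times
in the second. -/
def pdv (k l : ℕ) (f : ℂ → ℂ → ℂ) (s w : ℂ) : ℂ :=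
  iteratedDeriv k (fun z => iteratedDeriv l (f z) w) s

/-- `Hess[f_y] = (∂₂₀f_y)(∂₀₂f_y) − (∂₁₁f_y)²`. -/
def HessC (y : ℝ) (s w : ℂ) : ℂ :=
  pdv 2 0 (fy y) s w * pdv 0 2 (fy y) s w - (pdv 1 1 (fy y) s w) ^ 2

/-- The domain `D_δ(α;y)`. -/
def Ddom (δ α y : ℝ) : Set (ℝ × ℝ) :=
  {p | 0 < p.1 ∧ p.1 ≤ 1 ∧ 0 < p.2 ∧ p.2 ≤ 1 ∧ 0 ≤ (p.1 - α) * (α - p.2) ∧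
    1 / (1 + δ) ≤ (1 - (2 : ℝ) ^ (-p.1)) / (1 - (2 : ℝ) ^ (-p.2)) ∧
    (1 - (2 : ℝ) ^ (-p.1)) / (1 - (2 : ℝ) ^ (-p.2)) ≤ 1 + δ ∧
    |p.1 - p.2| * Real.log y ≤ δ}

/-- `φ_k(s,y)`: the `k`-th derivative in `s` of `φ₀(s,y) = −∑_{p ≤ y} log(1−p^{-s})`. -/
def phiD (y : ℝ) (k : ℕ) (s : ℂ) : ℂ :=
  iteratedDeriv k (fun z => -∑ p ∈ primesLe y, Complex.log (1 - (p : ℂ) ^ (-z))) s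

/-- `φ₂(σ,y) = ∑_{p ≤ y} (log p)² p^σ/(p^σ−1)²` for real `σ`. -/
def phi2R (y σ : ℝ) : ℝ :=
  ∑ p ∈ primesLe y, (Real.log p) ^ 2 * (p : ℝ) ^ σ / ((p : ℝ) ^ σ - 1) ^ 2



def Sfun : ℂ → ℂ := dslope (fun w => 2 * Complex.sinh (w / 2)) 0
def Gfun (w : ℂ) : ℂ := Complex.log (Sfun w)
def Hfun : ℂ → ℂ := dslope (dslope Gfun 0) 0
def Dfun : ℂ → ℂ := dslope (fun w => Complex.exp (-w)) 0

lemma analyticAt_sinh2 (z : ℂ) : AnalyticAt ℂ (fun w : ℂ => 2 * Complex.sinh (w / 2)) z := by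
  have : AnalyticAt ℂ Complex.sinh (z / 2) := by
    have : Complex.sinh = fun w : ℂ => (Complex.exp w - Complex.exp (-w)) / 2 := by
      funext w; rw [Complex.sinh]
    rw [this]
    exact ((analyticAt_cexp.sub (analyticAt_cexp.comp analyticAt_id.neg))).div
      analyticAt_const two_ne_zero
  have h2 : AnalyticAt ℂ (fun w : ℂ => w / 2) z :=
    (analyticAt_id.div analyticAt_const two_ne_zero : AnalyticAt ℂ (fun w : ℂ => w / 2) z)
  have h3 : AnalyticAt ℂ (Complex.sinh ∘ fun w : ℂ => w / 2) z :=
    AnalyticAt.comp (f := fun w : ℂ => w / 2) (x := z) this h2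
  exact analyticAt_const.mul h3

lemma Sfun_of_ne {w : ℂ} (hw : w ≠ 0) : Sfun w = 2 * Complex.sinh (w / 2) / w := by
  rw [Sfun, dslope_of_ne _ hw, slope_def_field]
  simp

lemma Sfun_zero : Sfun 0 = 1 := by
  rw [Sfun, dslope_same]
  have h : HasDerivAt (fun w : ℂ => 2 * Complex.sinh (w / 2)) 1 0 := by
    have h1 : HasDerivAt (fun w : ℂ => w / 2) (1 / 2) 0 := (hasDerivAt_id 0).div_const 2
    have h2 := (Complex.hasDerivAt_sinh ((0:ℂ) / 2)).comp 0 h1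
    have h3 := h2.const_mul (2:ℂ)
    have : (2:ℂ) * (Complex.cosh (0 / 2) * (1 / 2)) = 1 := by
      norm_num [Complex.cosh_zero]
    rwa [this] at h3
  exact h.deriv

lemma analyticAt_dslope_center {f : ℂ → ℂ} {c : ℂ} (hf : AnalyticAt ℂ f c) :
    AnalyticAt ℂ (dslope f c) c := by
  obtain ⟨p, hp⟩ := hf
  exact ⟨_, hp.has_fpower_series_dslope_fslope⟩

lemma analyticAt_dslope_of_ne {f : ℂ → ℂ} {c z : ℂ} (hf : AnalyticAt ℂ f z) (h : z ≠ c) :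
    AnalyticAt ℂ (dslope f c) z := by
  have h1 : AnalyticAt ℂ (fun w => (f w - f c) / (w - c)) z :=
    (hf.sub analyticAt_const).div (analyticAt_id.sub analyticAt_const) (sub_ne_zero.2 h)
  apply h1.congr
  filter_upwards [eventually_ne_nhds h] with w hw
  rw [dslope_of_ne _ hw, slope_def_field]

lemma analyticAt_Sfun (z : ℂ) : AnalyticAt ℂ Sfun z := by
  rcases eq_or_ne z 0 with rfl | hz
  · exact analyticAt_dslope_center (analyticAt_sinh2 0)
  · exact analyticAt_dslope_of_ne (analyticAt_sinh2 z) hz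

lemma csinh_re (z : ℂ) : (Complex.sinh z).re = Real.sinh z.re * Real.cos z.im := by
  rw [Real.sinh, Complex.sinh, Complex.sinh]
  simp [Complex.exp_re, Complex.div_re, Complex.normSq_apply, Real.cos_neg, Real.sin_neg]
  ring

lemma csinh_im (z : ℂ) : (Complex.sinh z).im = Real.cosh z.re * Real.sin z.im := by
  rw [Real.cosh, Complex.cosh, Complex.sinh]
  simp [Complex.exp_re, Complex.exp_im, Complex.div_re, Complex.div_im,
    Complex.normSq_apply, Real.cos_neg, Real.sin_neg]
  ring

lemma re_sinh_div_pos {v : ℂ} (hv : |v.im| < Real.pi / 2) (h0 : v ≠ 0) :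
    0 < (Complex.sinh v / v).re := by
  rw [Complex.div_re, csinh_re, csinh_im]
  have hns : 0 < Complex.normSq v := Complex.normSq_pos.2 h0
  rw [← add_div, lt_div_iff₀ hns]
  rw [abs_lt] at hv
  have hcos : 0 < Real.cos v.im :=
    Real.cos_pos_of_mem_Ioo ⟨hv.1, hv.2⟩
  have h1 : 0 ≤ Real.sinh v.re * v.re := by
    rcases le_or_gt 0 v.re with h | h
    · exact mul_nonneg (by rwa [← Real.sinh_zero, Real.sinh_le_sinh]) h
    · exact mul_nonneg_of_nonpos_of_nonpos (by rw [← Real.sinh_zero, Real.sinh_le_sinh]; exact h.le) h.le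
  have h2 : 0 ≤ Real.sin v.im * v.im := by
    rcases le_or_gt 0 v.im with h | h
    · exact mul_nonneg (Real.sin_nonneg_of_nonneg_of_le_pi h (by linarith [Real.pi_pos])) h
    · apply mul_nonneg_of_nonpos_of_nonpos _ h.le
      have : 0 ≤ Real.sin (-v.im) := Real.sin_nonneg_of_nonneg_of_le_pi (by linarith) (by linarith [Real.pi_pos])
      rw [Real.sin_neg] at this; linarith
  have hcosh : (1:ℝ) ≤ Real.cosh v.re := Real.one_le_cosh v.re
  rcases eq_or_ne v.re 0 with hre | hre
  · have him : v.im ≠ 0 := by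
      intro h; exact h0 (Complex.ext hre h)
    have h2' : 0 < Real.sin v.im * v.im := by
      rcases lt_or_gt_of_ne him with h | h
      · apply mul_pos_of_neg_of_neg _ h
        have : 0 < Real.sin (-v.im) := Real.sin_pos_of_pos_of_lt_pi (by linarith) (by linarith [Real.pi_pos])
        rw [Real.sin_neg] at this; linarith
      · exact mul_pos (Real.sin_pos_of_pos_of_lt_pi h (by linarith [Real.pi_pos])) h
    have := mul_nonneg (mul_nonneg (by rw [hre, Real.sinh_zero] : (0:ℝ) ≤ Real.sinh v.re) hcos.le) (le_of_eq hre.symm)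
    nlinarith
  · have h1' : 0 < Real.sinh v.re * v.re := by
      rcases lt_or_gt_of_ne hre with h | h
      · exact mul_pos_of_neg_of_neg (Real.sinh_neg_iff.2 h) h
      · exact mul_pos (Real.sinh_pos_iff.2 h) h
    nlinarith

lemma Sfun_re_pos {w : ℂ} (hw : |w.im| < Real.pi) : 0 < (Sfun w).re := by
  rcases eq_or_ne w 0 with rfl | hz
  · simp [Sfun_zero]
  · rw [Sfun_of_ne hz]
    have hv : |(w / 2).im| < Real.pi / 2 := by
      have h2 : (w / 2).im = w.im / 2 := by
        simp [Complex.div_im, Complex.normSq_apply]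
      rw [h2, abs_div, _root_.abs_two]
      linarith
    have h0 : w / 2 ≠ 0 := by simpa using hz
    have := re_sinh_div_pos hv h0
    have heq : 2 * Complex.sinh (w / 2) / w = Complex.sinh (w / 2) / (w / 2) := by
      field_simp
    rw [heq]
    exact this

lemma Sfun_slit {w : ℂ} (hw : |w.im| < Real.pi) : Sfun w ∈ Complex.slitPlane :=
  Complex.mem_slitPlane_iff.2 (Or.inl (Sfun_re_pos hw))

lemma analyticAt_Gfun {w : ℂ} (hw : |w.im| < Real.pi) : AnalyticAt ℂ Gfun w :=
  (analyticAt_clog (Sfun_slit hw)).comp (analyticAt_Sfun w)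

lemma Gfun_zero : Gfun 0 = 0 := by rw [Gfun, Sfun_zero, Complex.log_one]

lemma Sfun_even (w : ℂ) : Sfun (-w) = Sfun w := by
  rcases eq_or_ne w 0 with rfl | hz
  · simp
  · rw [Sfun_of_ne (neg_ne_zero.2 hz), Sfun_of_ne hz]
    rw [show (-w) / 2 = -(w/2) by ring, Complex.sinh_neg]
    field_simp

lemma Gfun_even (w : ℂ) : Gfun (-w) = Gfun w := by rw [Gfun, Gfun, Sfun_even]

lemma deriv_Gfun_zero : deriv Gfun 0 = 0 := by
  have hd : DifferentiableAt ℂ Gfun 0 :=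
    (analyticAt_Gfun (by simp [Real.pi_pos] : |(0:ℂ).im| < Real.pi)).differentiableAt
  have h1 : HasDerivAt Gfun (deriv Gfun 0) 0 := hd.hasDerivAt
  have hneg : HasDerivAt (fun w : ℂ => -w) (-1) 0 := (hasDerivAt_id 0).neg
  have h2 : HasDerivAt (Gfun ∘ fun w : ℂ => -w) (deriv Gfun 0 * (-1)) 0 :=
    HasDerivAt.comp (x := (0:ℂ)) (by simpa using h1) hneg
  have h3 : (Gfun ∘ fun w : ℂ => -w) = Gfun := funext fun w => Gfun_even w
  rw [h3] at h2
  have h4 := h1.unique h2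
  linear_combination (1/2 : ℂ) * h4

lemma analyticAt_Hfun {w : ℂ} (hw : |w.im| < Real.pi) : AnalyticAt ℂ Hfun w := by
  rcases eq_or_ne w 0 with rfl | hz
  · exact analyticAt_dslope_center (analyticAt_dslope_center (analyticAt_Gfun hw))
  · exact analyticAt_dslope_of_ne (analyticAt_dslope_of_ne (analyticAt_Gfun hw) hz) hz

lemma Gfun_eq_Hfun {w : ℂ} (hz : w ≠ 0) : Gfun w = w ^ 2 * Hfun w := by
  rw [Hfun, dslope_of_ne _ hz, slope_def_field, dslope_same, dslope_of_ne _ hz, slope_def_field,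
    deriv_Gfun_zero, Gfun_zero]
  field_simp
  ring

lemma analyticAt_expneg (z : ℂ) : AnalyticAt ℂ (fun w : ℂ => Complex.exp (-w)) z :=
  analyticAt_cexp.comp analyticAt_id.neg

lemma analyticAt_Dfun (z : ℂ) : AnalyticAt ℂ Dfun z := by
  rcases eq_or_ne z 0 with rfl | hz
  · exact analyticAt_dslope_center (analyticAt_expneg 0)
  · exact analyticAt_dslope_of_ne (analyticAt_expneg z) hz

lemma Dfun_zero : Dfun 0 = -1 := by
  rw [Dfun, dslope_same]
  have h : HasDerivAt (fun w : ℂ => Complex.exp (-w)) (-1) 0 := by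
    have hneg : HasDerivAt (fun w : ℂ => -w) (-1) 0 := (hasDerivAt_id 0).neg
    have := HasDerivAt.comp (x := (0:ℂ)) (by simpa using Complex.hasDerivAt_exp (-0:ℂ)) hneg
    simpa [Function.comp_def] using this
  exact h.deriv

lemma Dfun_of_ne {w : ℂ} (hz : w ≠ 0) : Dfun w = (Complex.exp (-w) - 1) / w := by
  rw [Dfun, dslope_of_ne _ hz, slope_def_field]
  simp

lemma Dfun_ne_zero {w : ℂ} (hw : |w.im| < Real.pi) : Dfun w ≠ 0 := by
  rcases eq_or_ne w 0 with rfl | hz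
  · rw [Dfun_zero]; exact neg_ne_zero.2 one_ne_zero
  · rw [Dfun_of_ne hz]
    apply div_ne_zero _ hz
    rw [sub_ne_zero]
    intro h
    obtain ⟨n, hn⟩ := Complex.exp_eq_one_iff.1 h
    have him : -w.im = (n : ℝ) * (2 * Real.pi) := by
      have := congrArg Complex.im hn
      simpa [Complex.mul_im, Complex.I_im, Complex.I_re] using this
    have hn0 : n = 0 := by
      rcases lt_trichotomy n 0 with h' | h' | h'
      · have : (n:ℝ) ≤ -1 := by exact_mod_cast (by omega : n ≤ -1)
        nlinarith [Real.pi_pos, abs_lt.1 hw]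
      · exact h'
      · have : (1:ℝ) ≤ (n:ℝ) := by exact_mod_cast h'
        nlinarith [Real.pi_pos, abs_lt.1 hw]
    apply hz
    rw [hn0] at hn
    simpa using (neg_eq_zero.1 (by simpa using hn))

def xiFun (a b : ℂ) : ℂ :=
  Hfun (Complex.log (1 - a) - Complex.log (1 - b)) *
    ((Dfun (Complex.log (1 - a) - Complex.log (1 - b)))⁻¹) ^ 2 / (1 - a) ^ 2

lemma one_sub_re_pos {a : ℂ} (ha : ‖a‖ < 1) : 0 < (1 - a).re := by
  have h1 : a.re ≤ ‖a‖ := Complex.re_le_norm a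
  have h2 : ‖a‖ < 1 := ha
  simp only [Complex.sub_re, Complex.one_re]
  linarith

lemma one_sub_ne {a : ℂ} (ha : ‖a‖ < 1) : (1 : ℂ) - a ≠ 0 := by
  intro h
  have := one_sub_re_pos ha
  rw [h] at this
  simp at this

lemma im_log_lt {a : ℂ} (ha : ‖a‖ < 1) : |(Complex.log (1 - a)).im| < Real.pi / 2 := by
  rw [Complex.log_im]
  exact Complex.abs_arg_lt_pi_div_two_iff.2 (Or.inl (one_sub_re_pos ha))

lemma im_q_lt {a b : ℂ} (ha : ‖a‖ < 1) (hb : ‖b‖ < 1) :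
    |((Complex.log (1 - a) - Complex.log (1 - b))).im| < Real.pi := by
  have h1 := im_log_lt ha
  have h2 := im_log_lt hb
  rw [Complex.sub_im]
  calc |(Complex.log (1 - a)).im - (Complex.log (1 - b)).im|
      ≤ |(Complex.log (1 - a)).im| + |(Complex.log (1 - b)).im| := abs_sub _ _
    _ < Real.pi := by linarith

/-- Lemma 3.(ii): `g((1−a)/(1−b)) = (a−b)² ξ(a,b)` for an analytic
function `ξ` on `U²`. -/
theorem stmt6 :
    ∃ ξ : ℂ → ℂ → ℂ,
      (∀ a b : ℂ, ‖a‖ < 1 → ‖b‖ < 1 →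
        AnalyticAt ℂ (fun p : ℂ × ℂ => ξ p.1 p.2) (a, b)) ∧
      ∀ a b : ℂ, ‖a‖ < 1 → ‖b‖ < 1 →
        gfun ((1 - a) / (1 - b)) = (a - b) ^ 2 * ξ a b := by
  refine ⟨xiFun, ?_, ?_⟩
  · intro a b ha hb
    have h1a : (1:ℂ) - a ≠ 0 := one_sub_ne ha
    have hqim : |((Complex.log (1 - a) - Complex.log (1 - b))).im| < Real.pi :=
      im_q_lt ha hb
    have hQ : AnalyticAt ℂ (fun p : ℂ × ℂ => Complex.log (1 - p.1) - Complex.log (1 - p.2))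
        (a, b) := by
      have hA : AnalyticAt ℂ (fun p : ℂ × ℂ => Complex.log (1 - p.1)) (a, b) := by
        apply AnalyticAt.clog
        · exact analyticAt_const.sub analyticAt_fst
        · exact Complex.mem_slitPlane_iff.2 (Or.inl (one_sub_re_pos ha))
      have hB : AnalyticAt ℂ (fun p : ℂ × ℂ => Complex.log (1 - p.2)) (a, b) := by
        apply AnalyticAt.clog
        · exact analyticAt_const.sub analyticAt_snd
        · exact Complex.mem_slitPlane_iff.2 (Or.inl (one_sub_re_pos hb))
      exact hA.sub hB
    simp only [xiFun]
    apply AnalyticAt.div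
    · apply AnalyticAt.mul
      · exact AnalyticAt.comp (f := fun p : ℂ × ℂ =>
          Complex.log (1 - p.1) - Complex.log (1 - p.2)) (analyticAt_Hfun hqim) hQ
      · apply AnalyticAt.pow
        apply AnalyticAt.inv
        · exact AnalyticAt.comp (f := fun p : ℂ × ℂ =>
            Complex.log (1 - p.1) - Complex.log (1 - p.2)) (analyticAt_Dfun _) hQ
        · exact Dfun_ne_zero hqim
    · exact (analyticAt_const.sub analyticAt_fst).pow 2
    · exact pow_ne_zero 2 h1a
  · intro a b ha hb
    have h1a : (1:ℂ) - a ≠ 0 := one_sub_ne ha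
    have h1b : (1:ℂ) - b ≠ 0 := one_sub_ne hb
    rcases eq_or_ne a b with rfl | hab
    · simp [gfun, div_self h1a]
    · set q := Complex.log (1 - a) - Complex.log (1 - b) with hqdef
      have hqim : |q.im| < Real.pi := im_q_lt ha hb
      have hq0 : q ≠ 0 := by
        intro h
        apply hab
        have h2 : Complex.log (1 - a) = Complex.log (1 - b) := by
          rw [hqdef] at h; rwa [sub_eq_zero] at h
        have h3 := congrArg Complex.exp h2
        rw [Complex.exp_log h1a, Complex.exp_log h1b] at h3
        linear_combination -h3
      have hexpq : Complex.exp q = (1 - a) / (1 - b) := by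
        rw [hqdef, Complex.exp_sub, Complex.exp_log h1a, Complex.exp_log h1b]
      have hz0 : (1 - a) / (1 - b) ≠ 0 := div_ne_zero h1a h1b
      have hz1 : (1 - a) / (1 - b) ≠ 1 := by
        intro h
        rw [div_eq_one_iff_eq h1b] at h
        exact hab (by linear_combination -h)
      have hlog : Complex.log ((1 - a) / (1 - b)) = q := by
        rw [← hexpq, Complex.log_exp (by rw [abs_lt] at hqim; linarith [hqim.1])
          (by rw [abs_lt] at hqim; linarith [hqim.2])]
      simp only [gfun, if_neg hz1]
      have hhalf : ((1 - a) / (1 - b)) ^ (2⁻¹ : ℂ) = Complex.exp (q / 2) := by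
        rw [Complex.cpow_def_of_ne_zero hz0, hlog]
        ring_nf
      have hhalf' : ((1 - a) / (1 - b)) ^ (-2⁻¹ : ℂ) = Complex.exp (-(q / 2)) := by
        rw [Complex.cpow_def_of_ne_zero hz0, hlog]
        ring_nf
      have hS : (((1 - a) / (1 - b)) ^ (2⁻¹ : ℂ) - ((1 - a) / (1 - b)) ^ (-2⁻¹ : ℂ)) /
          Complex.log ((1 - a) / (1 - b)) = Sfun q := by
        rw [hhalf, hhalf', hlog, Sfun_of_ne hq0]
        congr 1
        rw [Complex.sinh]
        ring
      rw [hS]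
      have hG : Complex.log (Sfun q) = Gfun q := rfl
      rw [hG, Gfun_eq_Hfun hq0]
      have hD : Complex.exp (-q) - 1 = q * Dfun q := by
        rw [Dfun_of_ne hq0]
        field_simp
      have hab2 : a - b = (1 - a) * (q * Dfun q) := by
        rw [← hD]
        have hexp : Complex.exp (-q) = (1 - b) / (1 - a) := by
          rw [hqdef, neg_sub, Complex.exp_sub, Complex.exp_log h1a, Complex.exp_log h1b]
        rw [hexp]
        field_simp
        ring
      have hDq := Dfun_ne_zero hqim
      rw [xiFun, ← hqdef, hab2]
      field_simp

end
end

section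
/- For all real numbers a, b ∈ (0,1): (∂²Ξ/∂a²)(a,b) · (∂²Ξ/∂b²)(a,b) − ((∂²Ξ/∂a∂b)(a,b))² > 0, where these second partial derivatives of Ξ take real values at real arguments (a,b) ∈ (0,1)². -/
open Complex Finset MeasureTheory
open scoped Real Classical

noncomputable section

section XiAux

open intervalIntegral

/-- `σₙ(t) = ∫_{-1/2}^{1/2} s^n e^{ts} ds`. -/
def sigN (n : ℕ) (t : ℂ) : ℂ := ∫ s in (-(2⁻¹:ℝ))..(2⁻¹:ℝ), (s:ℂ)^n * Complex.exp (t*s)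

lemma continuous_sig_integrand (n : ℕ) (t : ℂ) :
    Continuous (fun s : ℝ => (s:ℂ)^n * Complex.exp (t*s)) := by
  fun_prop

lemma hasDerivAt_sigN (n : ℕ) (t : ℂ) : HasDerivAt (sigN n) (sigN (n+1) t) t := by
  have h := intervalIntegral.hasDerivAt_integral_of_dominated_loc_of_deriv_le
    (F := fun (x : ℂ) (s : ℝ) => (s:ℂ)^n * Complex.exp (x*s))
    (F' := fun (x : ℂ) (s : ℝ) => (s:ℂ)^(n+1) * Complex.exp (x*s))
    (x₀ := t) (a := (-(2⁻¹:ℝ))) (b := (2⁻¹:ℝ)) (μ := volume)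
    (bound := fun _ => Real.exp (‖t‖ + 1)) (s := Metric.ball t 1) (Metric.ball_mem_nhds t one_pos)
    ?meas ?int ?meas' ?bound ?bint ?diff
  · exact h.2
  case meas =>
    filter_upwards with x using ((continuous_sig_integrand n x).aestronglyMeasurable).restrict
  case int => exact (continuous_sig_integrand n t).intervalIntegrable _ _
  case meas' => exact ((continuous_sig_integrand (n+1) t).aestronglyMeasurable).restrict
  case bound =>
    filter_upwards with s hs x hx
    have hs' : |s| ≤ 1 := by
      rw [Set.uIoc_of_le (by norm_num : (-(2⁻¹:ℝ)) ≤ 2⁻¹)] at hs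
      rw [abs_le]; constructor <;> nlinarith [hs.1, hs.2]
    rw [norm_mul, norm_pow]
    have h1 : ‖(s:ℂ)‖ ≤ 1 := by rwa [Complex.norm_real, Real.norm_eq_abs]
    have h2 : ‖Complex.exp (x*s)‖ ≤ Real.exp (‖t‖ + 1) := by
      rw [Complex.norm_exp]
      apply Real.exp_le_exp.2
      have : (x * s).re = x.re * s := by simp
      rw [this]
      have hxn : ‖x‖ ≤ ‖t‖ + 1 := by
        have hb := mem_ball_iff_norm.1 hx
        calc ‖x‖ = ‖t + (x - t)‖ := by ring_nf
          _ ≤ ‖t‖ + ‖x - t‖ := norm_add_le _ _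
          _ ≤ ‖t‖ + 1 := by linarith
      calc x.re * s ≤ |x.re * s| := le_abs_self _
        _ = |x.re| * |s| := abs_mul _ _
        _ ≤ ‖x‖ * 1 := mul_le_mul (Complex.abs_re_le_norm x) hs' (abs_nonneg _) (norm_nonneg _)
        _ ≤ ‖t‖ + 1 := by rw [mul_one]; exact hxn
    calc ‖(s:ℂ)‖^(n+1) * ‖Complex.exp (x*s)‖ ≤ 1 * Real.exp (‖t‖+1) := by
          apply mul_le_mul _ h2 (norm_nonneg _) zero_le_one
          exact pow_le_one₀ (norm_nonneg _) h1
      _ = _ := one_mul _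
  case bint => exact intervalIntegrable_const
  case diff =>
    filter_upwards with s hs x hx
    have : HasDerivAt (fun x : ℂ => Complex.exp (x * s)) (Complex.exp (x*s) * s) x := by
      exact ((Complex.hasDerivAt_exp (x*s)).comp x (hasDerivAt_mul_const (s:ℂ)))
    simpa [pow_succ, mul_comm, mul_assoc, mul_left_comm] using this.const_mul ((s:ℂ)^n)

/-- real version -/
def rsig (n : ℕ) (t : ℝ) : ℝ := ∫ s in (-(2⁻¹:ℝ))..(2⁻¹:ℝ), s^n * Real.exp (t*s)

lemma sigN_ofReal (n : ℕ) (t : ℝ) : sigN n (t : ℂ) = ((rsig n t : ℝ) : ℂ) := by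
  rw [sigN, rsig, ← intervalIntegral.integral_ofReal]
  congr 1; ext s; push_cast [Complex.ofReal_exp]; ring

lemma continuous_rsig_integrand (n : ℕ) (t : ℝ) :
    Continuous (fun s : ℝ => s^n * Real.exp (t*s)) := by fun_prop

lemma rsig_pos (t : ℝ) : 0 < rsig 0 t := by
  apply intervalIntegral.intervalIntegral_pos_of_pos
  · exact (continuous_rsig_integrand 0 t).intervalIntegrable _ _
  · intro x; positivity
  · norm_num

lemma rsig_two_lt (t : ℝ) : rsig 2 t < 4⁻¹ * rsig 0 t := by
  have h : 4⁻¹ * rsig 0 t = ∫ s in (-(2⁻¹:ℝ))..(2⁻¹:ℝ), 4⁻¹ * (s^0 * Real.exp (t*s)) := by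
    rw [rsig, ← intervalIntegral.integral_const_mul]
  rw [h, rsig]
  apply intervalIntegral.integral_lt_integral_of_continuousOn_of_le_of_exists_lt
  · norm_num
  · exact (continuous_rsig_integrand 2 t).continuousOn
  · exact (continuous_const.mul (continuous_rsig_integrand 0 t)).continuousOn
  · intro x hx
    have h1 : x^2 ≤ 4⁻¹ := by
      have : |x| ≤ 2⁻¹ := by rw [abs_le]; exact ⟨hx.1.le, hx.2⟩
      nlinarith [abs_nonneg x, _root_.sq_abs x]
    have := Real.exp_pos (t*x)
    nlinarith
  · refine ⟨0, by norm_num, by norm_num [Real.exp_pos]⟩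

lemma sigN_zero_zero : sigN 0 0 = 1 := by
  simp [sigN]; norm_num

lemma sigN_eq_of_ne (t : ℂ) (ht : t ≠ 0) :
    sigN 0 t = (Complex.exp (t/2) - Complex.exp (-(t/2)))/t := by
  rw [sigN]
  simp only [pow_zero, one_mul]
  rw [integral_exp_mul_complex ht]
  norm_num
  ring_nf

lemma gfun_eq {z : ℂ} (hz : z ∈ Complex.slitPlane) :
    gfun z = Complex.log (sigN 0 (Complex.log z)) := by
  rcases eq_or_ne z 1 with rfl | h1
  · simp [gfun, sigN_zero_zero]
  · have hz0 : z ≠ 0 := Complex.slitPlane_ne_zero hz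
    have ht : Complex.log z ≠ 0 := by
      intro h
      apply h1
      have := Complex.exp_log hz0
      rw [h, Complex.exp_zero] at this
      exact this.symm
    rw [gfun, if_neg h1, sigN_eq_of_ne _ ht]
    congr 2
    rw [Complex.cpow_def_of_ne_zero hz0, Complex.cpow_def_of_ne_zero hz0]
    ring_nf

def Zf (s w : ℂ) : ℂ := (1 - s) / (1 - w)
def Tf (s w : ℂ) : ℂ := Complex.log (Zf s w)

def Good (s w : ℂ) : Prop :=
  (1 - s) ∈ Complex.slitPlane ∧ (1 - w) ∈ Complex.slitPlane ∧
    Zf s w ∈ Complex.slitPlane ∧ sigN 0 (Tf s w) ∈ Complex.slitPlane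

lemma continuous_sigN (n : ℕ) : Continuous (sigN n) :=
  continuous_iff_continuousAt.2 fun t => (hasDerivAt_sigN n t).continuousAt

lemma isOpen_good : IsOpen {p : ℂ × ℂ | Good p.1 p.2} := by
  rw [isOpen_iff_mem_nhds]
  rintro ⟨s, w⟩ ⟨h1, h2, h3, h4⟩
  have h2' : (1 : ℂ) - w ≠ 0 := Complex.slitPlane_ne_zero h2
  have hcZ : ContinuousAt (fun p : ℂ × ℂ => Zf p.1 p.2) (s, w) := by
    apply ContinuousAt.div
    · fun_prop
    · fun_prop
    · exact h2'
  have hcT : ContinuousAt (fun p : ℂ × ℂ => Tf p.1 p.2) (s, w) :=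
    ContinuousAt.comp (g := Complex.log) (f := fun p : ℂ × ℂ => Zf p.1 p.2) (continuousAt_clog h3) hcZ
  have hcS : ContinuousAt (fun p : ℂ × ℂ => sigN 0 (Tf p.1 p.2)) (s, w) :=
    ContinuousAt.comp (g := sigN 0) (f := fun p : ℂ × ℂ => Tf p.1 p.2) (continuous_sigN 0).continuousAt hcT
  have e1 : ∀ᶠ p : ℂ × ℂ in nhds (s, w), (1 - p.1) ∈ Complex.slitPlane := by
    exact ContinuousAt.eventually_mem (f := fun p : ℂ × ℂ => 1 - p.1) (by fun_prop)
      (Complex.isOpen_slitPlane.mem_nhds h1)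
  have e2 : ∀ᶠ p : ℂ × ℂ in nhds (s, w), (1 - p.2) ∈ Complex.slitPlane := by
    exact ContinuousAt.eventually_mem (f := fun p : ℂ × ℂ => 1 - p.2) (by fun_prop)
      (Complex.isOpen_slitPlane.mem_nhds h2)
  have e3 : ∀ᶠ p : ℂ × ℂ in nhds (s, w), Zf p.1 p.2 ∈ Complex.slitPlane :=
    hcZ.eventually_mem (Complex.isOpen_slitPlane.mem_nhds h3)
  have e4 : ∀ᶠ p : ℂ × ℂ in nhds (s, w), sigN 0 (Tf p.1 p.2) ∈ Complex.slitPlane :=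
    hcS.eventually_mem (Complex.isOpen_slitPlane.mem_nhds h4)
  filter_upwards [e1, e2, e3, e4] with p g1 g2 g3 g4
  exact ⟨g1, g2, g3, g4⟩

def Rfun (t : ℂ) : ℂ := sigN 1 t / sigN 0 t
def Rd (t : ℂ) : ℂ := (sigN 2 t * sigN 0 t - sigN 1 t ^ 2) / (sigN 0 t) ^ 2
def P1 (s w : ℂ) : ℂ := (2⁻¹ + Rfun (Tf s w)) * (1 - s)⁻¹
def P2 (s w : ℂ) : ℂ := (2⁻¹ - Rfun (Tf s w)) * (1 - w)⁻¹
def Q20 (s w : ℂ) : ℂ := (2⁻¹ + Rfun (Tf s w) - Rd (Tf s w)) * ((1 - s)⁻¹) ^ 2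
def Q02 (s w : ℂ) : ℂ := (2⁻¹ - Rfun (Tf s w) - Rd (Tf s w)) * ((1 - w)⁻¹) ^ 2
def Q11 (s w : ℂ) : ℂ := Rd (Tf s w) * ((1 - s)⁻¹ * (1 - w)⁻¹)

lemma hasDerivAt_Rfun {t : ℂ} (h : sigN 0 t ≠ 0) : HasDerivAt Rfun (Rd t) t := by
  have := (hasDerivAt_sigN 1 t).div (hasDerivAt_sigN 0 t) h
  refine this.congr_deriv ?_
  rw [Rd]; ring_nf

lemma hasDerivAt_Tf_fst {s w : ℂ} (hg : Good s w) :
    HasDerivAt (fun x => Tf x w) (-(1 - s)⁻¹) s := by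
  obtain ⟨h1, h2, h3, _⟩ := hg
  have hs : (1 : ℂ) - s ≠ 0 := Complex.slitPlane_ne_zero h1
  have hw : (1 : ℂ) - w ≠ 0 := Complex.slitPlane_ne_zero h2
  have hz : HasDerivAt (fun x : ℂ => (1 - x) / (1 - w)) (-(1 - w)⁻¹) s := by
    simpa [div_eq_mul_inv, neg_mul] using
      (((hasDerivAt_id s).const_sub 1).mul_const ((1 - w)⁻¹))
  have h := hz.clog h3
  have he : -(1 - s)⁻¹ = -(1 - w)⁻¹ / ((1 - s) / (1 - w)) := by field_simp
  simp only [Tf, Zf]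
  rw [he]
  exact h

lemma hasDerivAt_Tf_snd {s w : ℂ} (hg : Good s w) :
    HasDerivAt (fun y => Tf s y) ((1 - w)⁻¹) w := by
  obtain ⟨h1, h2, h3, _⟩ := hg
  have hs : (1 : ℂ) - s ≠ 0 := Complex.slitPlane_ne_zero h1
  have hw : (1 : ℂ) - w ≠ 0 := Complex.slitPlane_ne_zero h2
  have hz : HasDerivAt (fun y : ℂ => (1 - s) / (1 - y)) ((1 - s) * ((1 - w) ^ 2)⁻¹) w := by
    have hinv : HasDerivAt (fun y : ℂ => (1 - y)⁻¹) (((1 - w) ^ 2)⁻¹) w := by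
      have := (((hasDerivAt_id w).const_sub 1)).inv hw
      simp at this; exact this
    simpa [div_eq_mul_inv] using hinv.const_mul (1 - s)
  have h := hz.clog h3
  have he : (1 - w)⁻¹ = (1 - s) * ((1 - w) ^ 2)⁻¹ / ((1 - s) / (1 - w)) := by
    field_simp
  simp only [Tf, Zf]
  rw [he]
  exact h

lemma Xi_eq {s w : ℂ} (h : Zf s w ∈ Complex.slitPlane) :
    Xi s w = -(2⁻¹ : ℂ) * Complex.log (1 - s) - (2⁻¹ : ℂ) * Complex.log (1 - w) -
      Complex.log (sigN 0 (Tf s w)) := by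
  rw [Xi]
  rw [show (1 - s) / (1 - w) = Zf s w from rfl, gfun_eq h]
  rfl

lemma good_ev_fst {s w : ℂ} (hg : Good s w) : ∀ᶠ x in nhds s, Good x w := by
  have : ContinuousAt (fun x : ℂ => (x, w)) s := by fun_prop
  exact this.eventually_mem (isOpen_good.mem_nhds hg)

lemma good_ev_snd {s w : ℂ} (hg : Good s w) : ∀ᶠ y in nhds w, Good s y := by
  have : ContinuousAt (fun y : ℂ => (s, y)) w := by fun_prop
  exact this.eventually_mem (isOpen_good.mem_nhds hg)

lemma hasDerivAt_Xi_fst {s w : ℂ} (hg : Good s w) :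
    HasDerivAt (fun x => Xi x w) (P1 s w) s := by
  obtain ⟨h1, h2, h3, h4⟩ := hg
  have hs : (1 : ℂ) - s ≠ 0 := Complex.slitPlane_ne_zero h1
  have hd1 : HasDerivAt (fun x : ℂ => Complex.log (1 - x)) ((-1) / (1 - s)) s :=
    ((hasDerivAt_id s).const_sub 1).clog h1
  have hdT := hasDerivAt_Tf_fst ⟨h1, h2, h3, h4⟩
  have hdS : HasDerivAt (fun x => sigN 0 (Tf x w)) (sigN 1 (Tf s w) * -(1 - s)⁻¹) s :=
    by have h := (hasDerivAt_sigN 0 (Tf s w)).comp s hdT; exact h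
  have hd3 : HasDerivAt (fun x => Complex.log (sigN 0 (Tf x w)))
      ((sigN 1 (Tf s w) * -(1 - s)⁻¹) / sigN 0 (Tf s w)) s := hdS.clog h4
  have hE : HasDerivAt (fun x => -(2⁻¹ : ℂ) * Complex.log (1 - x) -
      (2⁻¹ : ℂ) * Complex.log (1 - w) - Complex.log (sigN 0 (Tf x w)))
      (-(2⁻¹ : ℂ) * ((-1) / (1 - s)) - 0 - (sigN 1 (Tf s w) * -(1 - s)⁻¹) / sigN 0 (Tf s w)) s :=
    ((hd1.const_mul _).sub (hasDerivAt_const _ _)).sub hd3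
  have heq : (fun x => Xi x w) =ᶠ[nhds s] (fun x => -(2⁻¹ : ℂ) * Complex.log (1 - x) -
      (2⁻¹ : ℂ) * Complex.log (1 - w) - Complex.log (sigN 0 (Tf x w))) := by
    filter_upwards [good_ev_fst ⟨h1, h2, h3, h4⟩] with x hx
    exact Xi_eq hx.2.2.1
  have := hE.congr_of_eventuallyEq heq
  refine this.congr_deriv ?_
  rw [P1, Rfun]
  have h0 : sigN 0 (Tf s w) ≠ 0 := Complex.slitPlane_ne_zero h4
  field_simp
  ring

lemma hasDerivAt_Xi_snd {s w : ℂ} (hg : Good s w) :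
    HasDerivAt (fun y => Xi s y) (P2 s w) w := by
  obtain ⟨h1, h2, h3, h4⟩ := hg
  have hw : (1 : ℂ) - w ≠ 0 := Complex.slitPlane_ne_zero h2
  have hd1 : HasDerivAt (fun y : ℂ => Complex.log (1 - y)) ((-1) / (1 - w)) w :=
    ((hasDerivAt_id w).const_sub 1).clog h2
  have hdT := hasDerivAt_Tf_snd ⟨h1, h2, h3, h4⟩
  have hdS : HasDerivAt (fun y => sigN 0 (Tf s y)) (sigN 1 (Tf s w) * (1 - w)⁻¹) w :=
    by have h := (hasDerivAt_sigN 0 (Tf s w)).comp w hdT; exact h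
  have hd3 : HasDerivAt (fun y => Complex.log (sigN 0 (Tf s y)))
      ((sigN 1 (Tf s w) * (1 - w)⁻¹) / sigN 0 (Tf s w)) w := hdS.clog h4
  have hE : HasDerivAt (fun y => -(2⁻¹ : ℂ) * Complex.log (1 - s) -
      (2⁻¹ : ℂ) * Complex.log (1 - y) - Complex.log (sigN 0 (Tf s y)))
      (0 - (2⁻¹ : ℂ) * ((-1) / (1 - w)) - (sigN 1 (Tf s w) * (1 - w)⁻¹) / sigN 0 (Tf s w)) w :=
    ((hasDerivAt_const _ _).sub (hd1.const_mul _)).sub hd3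
  have heq : (fun y => Xi s y) =ᶠ[nhds w] (fun y => -(2⁻¹ : ℂ) * Complex.log (1 - s) -
      (2⁻¹ : ℂ) * Complex.log (1 - y) - Complex.log (sigN 0 (Tf s y))) := by
    filter_upwards [good_ev_snd ⟨h1, h2, h3, h4⟩] with y hy
    exact Xi_eq hy.2.2.1
  have := hE.congr_of_eventuallyEq heq
  refine this.congr_deriv ?_
  rw [P2, Rfun]
  have h0 : sigN 0 (Tf s w) ≠ 0 := Complex.slitPlane_ne_zero h4
  field_simp
  ring

lemma hasDerivAt_P1_fst {s w : ℂ} (hg : Good s w) :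
    HasDerivAt (fun x => P1 x w) (Q20 s w) s := by
  obtain ⟨h1, h2, h3, h4⟩ := hg
  have hs : (1 : ℂ) - s ≠ 0 := Complex.slitPlane_ne_zero h1
  have h0 : sigN 0 (Tf s w) ≠ 0 := Complex.slitPlane_ne_zero h4
  have hdR : HasDerivAt (fun x => Rfun (Tf x w)) (Rd (Tf s w) * -(1 - s)⁻¹) s :=
    by have h := (hasDerivAt_Rfun h0).comp s (hasDerivAt_Tf_fst ⟨h1, h2, h3, h4⟩); exact h
  have hdI : HasDerivAt (fun x : ℂ => (1 - x)⁻¹) (((1 - s) ^ 2)⁻¹) s := by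
    have := ((hasDerivAt_id s).const_sub 1).inv hs
    simp at this; exact this
  have := ((hdR.const_add (2⁻¹ : ℂ)).mul hdI)
  refine this.congr_deriv ?_
  rw [Q20]
  field_simp
  ring

lemma hasDerivAt_P2_snd {s w : ℂ} (hg : Good s w) :
    HasDerivAt (fun y => P2 s y) (Q02 s w) w := by
  obtain ⟨h1, h2, h3, h4⟩ := hg
  have hw : (1 : ℂ) - w ≠ 0 := Complex.slitPlane_ne_zero h2
  have h0 : sigN 0 (Tf s w) ≠ 0 := Complex.slitPlane_ne_zero h4
  have hdR : HasDerivAt (fun y => Rfun (Tf s y)) (Rd (Tf s w) * (1 - w)⁻¹) w :=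
    by have h := (hasDerivAt_Rfun h0).comp w (hasDerivAt_Tf_snd ⟨h1, h2, h3, h4⟩); exact h
  have hdI : HasDerivAt (fun y : ℂ => (1 - y)⁻¹) (((1 - w) ^ 2)⁻¹) w := by
    have := ((hasDerivAt_id w).const_sub 1).inv hw
    simp at this; exact this
  have := ((hdR.const_sub (2⁻¹ : ℂ)).mul hdI)
  refine this.congr_deriv ?_
  rw [Q02]
  field_simp
  ring

lemma hasDerivAt_P2_fst {s w : ℂ} (hg : Good s w) :
    HasDerivAt (fun x => P2 x w) (Q11 s w) s := by
  obtain ⟨h1, h2, h3, h4⟩ := hg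
  have hs : (1 : ℂ) - s ≠ 0 := Complex.slitPlane_ne_zero h1
  have h0 : sigN 0 (Tf s w) ≠ 0 := Complex.slitPlane_ne_zero h4
  have hdR : HasDerivAt (fun x => Rfun (Tf x w)) (Rd (Tf s w) * -(1 - s)⁻¹) s :=
    by have h := (hasDerivAt_Rfun h0).comp s (hasDerivAt_Tf_fst ⟨h1, h2, h3, h4⟩); exact h
  have := (hdR.const_sub (2⁻¹ : ℂ)).mul_const ((1 - w)⁻¹)
  refine this.congr_deriv ?_
  rw [Q11]
  ring

lemma pdv20_eq {s w : ℂ} (hg : Good s w) : pdv 2 0 Xi s w = Q20 s w := by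
  have h1 : pdv 2 0 Xi s w = deriv (deriv (fun z => Xi z w)) s := by
    simp [pdv, iteratedDeriv_succ, iteratedDeriv_zero]
  rw [h1]
  have he : deriv (fun z => Xi z w) =ᶠ[nhds s] (fun z => P1 z w) := by
    filter_upwards [good_ev_fst hg] with x hx
    exact (hasDerivAt_Xi_fst hx).deriv
  rw [he.deriv_eq]
  exact (hasDerivAt_P1_fst hg).deriv

lemma pdv02_eq {s w : ℂ} (hg : Good s w) : pdv 0 2 Xi s w = Q02 s w := by
  have h1 : pdv 0 2 Xi s w = deriv (deriv (fun y => Xi s y)) w := by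
    simp [pdv, iteratedDeriv_succ, iteratedDeriv_zero]
  rw [h1]
  have he : deriv (fun y => Xi s y) =ᶠ[nhds w] (fun y => P2 s y) := by
    filter_upwards [good_ev_snd hg] with y hy
    exact (hasDerivAt_Xi_snd hy).deriv
  rw [he.deriv_eq]
  exact (hasDerivAt_P2_snd hg).deriv

lemma pdv11_eq {s w : ℂ} (hg : Good s w) : pdv 1 1 Xi s w = Q11 s w := by
  have h1 : pdv 1 1 Xi s w = deriv (fun z => deriv (fun y => Xi z y) w) s := by
    simp [pdv, iteratedDeriv_one]
  rw [h1]
  have he : (fun z => deriv (fun y => Xi z y) w) =ᶠ[nhds s] (fun z => P2 z w) := by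
    filter_upwards [good_ev_fst hg] with x hx
    exact (hasDerivAt_Xi_snd hx).deriv
  rw [he.deriv_eq]
  exact (hasDerivAt_P2_fst hg).deriv

section RealPoint
variable {a b : ℝ} (ha0 : 0 < a) (ha1 : a < 1) (hb0 : 0 < b) (hb1 : b < 1)

lemma Zf_real : Zf (a : ℂ) (b : ℂ) = (((1 - a) / (1 - b) : ℝ) : ℂ) := by
  rw [Zf]; push_cast; ring

include ha1 hb1 in
lemma Tf_real : Tf (a : ℂ) (b : ℂ) = ((Real.log ((1 - a) / (1 - b)) : ℝ) : ℂ) := by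
  rw [Tf, Zf_real, Complex.ofReal_log]
  have h1a : (0:ℝ) < 1 - a := by linarith
  have h1b : (0:ℝ) < 1 - b := by linarith
  positivity

include ha1 hb1 in
lemma good_real : Good (a : ℂ) (b : ℂ) := by
  have h1a : (0:ℝ) < 1 - a := by linarith
  have h1b : (0:ℝ) < 1 - b := by linarith
  refine ⟨?_, ?_, ?_, ?_⟩
  · rw [show (1 : ℂ) - a = ((1 - a : ℝ) : ℂ) by push_cast; ring]
    exact Complex.ofReal_mem_slitPlane.2 h1a
  · rw [show (1 : ℂ) - b = ((1 - b : ℝ) : ℂ) by push_cast; ring]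
    exact Complex.ofReal_mem_slitPlane.2 h1b
  · rw [Zf_real]
    exact Complex.ofReal_mem_slitPlane.2 (by positivity)
  · rw [Tf_real ha1 hb1, sigN_ofReal]
    exact Complex.ofReal_mem_slitPlane.2 (rsig_pos _)

end RealPoint


end XiAux

/-- Lemma 3.(iv): positivity of the Hessian-type expression of `Ξ`
at real points `(a,b) ∈ (0,1)²`. -/
theorem stmt8 :
    ∀ a b : ℝ, 0 < a → a < 1 → 0 < b → b < 1 →
      (pdv 2 0 Xi (a : ℂ) (b : ℂ)).im = 0 ∧
      (pdv 0 2 Xi (a : ℂ) (b : ℂ)).im = 0 ∧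
      (pdv 1 1 Xi (a : ℂ) (b : ℂ)).im = 0 ∧
      0 < (pdv 2 0 Xi (a : ℂ) (b : ℂ)).re * (pdv 0 2 Xi (a : ℂ) (b : ℂ)).re -
            ((pdv 1 1 Xi (a : ℂ) (b : ℂ)).re) ^ 2 := by
  intro a b ha0 ha1 hb0 hb1
  have hg := good_real ha1 hb1
  have h1a : (0:ℝ) < 1 - a := by linarith
  have h1b : (0:ℝ) < 1 - b := by linarith
  obtain ⟨t, ht⟩ : ∃ t : ℝ, Real.log ((1 - a) / (1 - b)) = t := ⟨_, rfl⟩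
  have hT : Tf (a : ℂ) (b : ℂ) = (t : ℂ) := by rw [Tf_real ha1 hb1, ht]
  obtain ⟨r0, hr0e⟩ : ∃ r, rsig 0 t = r := ⟨_, rfl⟩
  obtain ⟨r1, hr1e⟩ : ∃ r, rsig 1 t = r := ⟨_, rfl⟩
  obtain ⟨r2, hr2e⟩ : ∃ r, rsig 2 t = r := ⟨_, rfl⟩
  have hr0 : 0 < r0 := hr0e ▸ rsig_pos t
  have hr2 : r2 < 4⁻¹ * r0 := hr0e ▸ hr2e ▸ rsig_two_lt t
  set rr : ℝ := r1 / r0 with hrr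
  set rrd : ℝ := (r2 * r0 - r1 ^ 2) / r0 ^ 2 with hrrd
  set ea : ℝ := (1 - a)⁻¹ with hea'
  set eb : ℝ := (1 - b)⁻¹ with heb'
  have hQ20 : Q20 (a : ℂ) (b : ℂ) = (((2⁻¹ + rr - rrd) * ea ^ 2 : ℝ) : ℂ) := by
    rw [Q20, Rfun, Rd, hT, sigN_ofReal, sigN_ofReal, sigN_ofReal, hr0e, hr1e, hr2e,
      hrr, hrrd, hea']
    push_cast
    ring
  have hQ02 : Q02 (a : ℂ) (b : ℂ) = (((2⁻¹ - rr - rrd) * eb ^ 2 : ℝ) : ℂ) := by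
    rw [Q02, Rfun, Rd, hT, sigN_ofReal, sigN_ofReal, sigN_ofReal, hr0e, hr1e, hr2e,
      hrr, hrrd, heb']
    push_cast
    ring
  have hQ11 : Q11 (a : ℂ) (b : ℂ) = ((rrd * (ea * eb) : ℝ) : ℂ) := by
    rw [Q11, Rd, hT, sigN_ofReal, sigN_ofReal, sigN_ofReal, hr0e, hr1e, hr2e,
      hrrd, hea', heb']
    push_cast
    ring
  rw [pdv20_eq hg, pdv02_eq hg, pdv11_eq hg, hQ20, hQ02, hQ11]
  refine ⟨Complex.ofReal_im _, Complex.ofReal_im _, Complex.ofReal_im _, ?_⟩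
  simp only [Complex.ofReal_re]
  have hkey : (2⁻¹ + rr - rrd) * ea ^ 2 * ((2⁻¹ - rr - rrd) * eb ^ 2) - (rrd * (ea * eb)) ^ 2
      = (4⁻¹ - r2 / r0) * (ea * eb) ^ 2 := by
    rw [hrr, hrrd]
    field_simp
    ring
  rw [hkey]
  have h4 : 0 < 4⁻¹ - r2 / r0 := by
    rw [sub_pos, div_lt_iff₀ hr0]
    linarith
  have hea : 0 < ea := by rw [hea']; positivity
  have heb : 0 < eb := by rw [heb']; positivity
  positivity


end
end
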